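/- Define δ(A) = -a₂₁·Y - a₁₂·X - ½(a₁₁ - a₂₂)·H for A in SL(2,ℂ). Then δ(A) satisfies the gradient property: for every W in sl₂(ℂ), B(δ(A), W) equals the derivative at h = 0 of h ↦ tr(A·exp(hW)), where B is the bilinear form on sl₂(ℂ) given by the matrix [[0,0,-1],[0,-2,0],[-1,0,0]] in the standard basis X, H, Y. -/

import Mathlib

open Matrix

attribute [local instance] Matrix.linftyOpNormedRing Matrix.linftyOpNormedAlgebra

noncomputable def Xb : Matrix (Fin 2) (Fin 2) ℂ := !![0, 1; 0, 0]
noncomputable def Hb : Matrix (Fin 2) (Fin 2) ℂ := !![1, 0; 0, -1]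
noncomputable def Yb : Matrix (Fin 2) (Fin 2) ℂ := !![0, 0; 1, 0]

/-- The gradient δ(A) = -a₂₁·Y - a₁₂·X - ½(a₁₁ - a₂₂)·H. -/
noncomputable def delta (A : Matrix (Fin 2) (Fin 2) ℂ) : Matrix (Fin 2) (Fin 2) ℂ :=
  (-(A 1 0)) • Yb + (-(A 0 1)) • Xb + (-((A 0 0 - A 1 1) / 2)) • Hb

/-- The bilinear form on sl₂(ℂ) given in the standard basis X, H, Y by the matrix
[[0,0,-1],[0,-2,0],[-1,0,0]]; in terms of entries of traceless matrices
(Z = Z01·X + Z00·H + Z10·Y) it is B(Z,W) = -(Z01·W10) - 2·(Z00·W00) - (Z10·W01). -/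
noncomputable def sl2Form (Z W : Matrix (Fin 2) (Fin 2) ℂ) : ℂ :=
  -(Z 0 1 * W 1 0) - 2 * (Z 0 0 * W 0 0) - Z 1 0 * W 0 1

/-- δ(A) is the gradient of the trace at A: for every traceless W,
B(δ(A), W) is the derivative at h = 0 of h ↦ tr(A·exp(hW)). -/
theorem delta_is_gradient (A : Matrix.SpecialLinearGroup (Fin 2) ℂ)
    (W : Matrix (Fin 2) (Fin 2) ℂ) (hW : W.trace = 0) :
    HasDerivAt (fun h : ℂ =>
        ((A : Matrix (Fin 2) (Fin 2) ℂ) * NormedSpace.exp (h • W)).trace)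
      (sl2Form (delta (A : Matrix (Fin 2) (Fin 2) ℂ)) W) 0 := by
  set M : Matrix (Fin 2) (Fin 2) ℂ := (A : Matrix (Fin 2) (Fin 2) ℂ)
  have hexp : HasDerivAt (fun h : ℂ => NormedSpace.exp (h • W)) W 0 := by
    have h := hasDerivAt_exp_smul_const (𝕂 := ℂ) W 0
    simp at h
    exact h
  let L : Matrix (Fin 2) (Fin 2) ℂ →L[ℂ] ℂ :=
    LinearMap.toContinuousLinearMap
      ((Matrix.traceLinearMap (Fin 2) ℂ ℂ).comp (LinearMap.mulLeft ℂ M))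
  have hL : HasDerivAt (fun h : ℂ => L (NormedSpace.exp (h • W))) (L W) 0 :=
    (L.hasFDerivAt.comp_hasDerivAt 0 hexp)
  have hform : L W = sl2Form (delta M) W := by
    have hW' : W 1 1 = -(W 0 0) := by
      have h2 : W 0 0 + W 1 1 = 0 := by simpa [Matrix.trace_fin_two] using hW
      linear_combination h2
    simp only [L, LinearMap.toContinuousLinearMap, sl2Form, delta, Xb, Hb, Yb]
    simp [Matrix.trace_fin_two, Matrix.mul_apply, Fin.sum_univ_succ, hW']
    ring
  rw [hform] at hL
  exact hL
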